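/- Let 1 < p < ∞ and p* = p/(p−1), and let (f_n) be a sequence of nonnegative measurable functions on [0,1] (with Lebesgue measure λ) having pairwise disjoint supports, such that for each n: sup_{t>0} t · λ({f_n > t})^{1/p} = 1, and f_n lies in the order-continuous part of weak-L_p, i.e., for every ε > 0 there exists δ > 0 such that every measurable A ⊆ [0,1] with 0 < λ(A) < δ satisfies λ(A)^{−1/p*} ∫_A f_n dλ ≤ ε. Then there exist a subsequence (f_{n_k}) and a constant C ≥ 1 such that for every finitely supported real sequence (a_k): sup_k |a_k| ≤ sup_{t>0} t · λ({ |Σ_k a_k f_{n_k}| > t })^{1/p} ≤ C · sup_k |a_k|; in particular, (f_{n_k}) is equivalent to the unit vector basis of c₀. -/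

import Mathlib

noncomputable section

open scoped BigOperators ENNReal
open MeasureTheory

/-- The weak-`L_p` quasinorm `⦀g⦀_{p,∞} = sup_{t>0} t · μ({|g| > t})^{1/p}`, valued in
`ℝ≥0∞`. -/
def weakQuasinorm {Ω : Type*} [MeasurableSpace Ω] (μ : Measure Ω) (p : ℝ)
    (g : Ω → ℝ) : ℝ≥0∞ :=
  ⨆ (t : ℝ) (_ : 0 < t), ENNReal.ofReal t * μ { x | t < |g x| } ^ (1 / p)

/-- Lebesgue measure restricted to `[0,1]`. -/
def lebOn01 : Measure ℝ := MeasureTheory.volume.restrict (Set.Icc (0 : ℝ) 1)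

namespace C0Aux

lemma lebOn01_univ : lebOn01 Set.univ = 1 := by
  simp [lebOn01, Real.volume_Icc]

lemma lebOn01_le_one (A : Set ℝ) : lebOn01 A ≤ 1 := by
  calc lebOn01 A ≤ lebOn01 Set.univ := measure_mono (Set.subset_univ A)
  _ = 1 := lebOn01_univ

lemma lebOn01_ne_top (A : Set ℝ) : lebOn01 A ≠ ⊤ :=
  ((lebOn01_le_one A).trans_lt ENNReal.one_lt_top).ne

lemma term_le (p : ℝ) (g : ℝ → ℝ) {t : ℝ} (ht : 0 < t) :
    ENNReal.ofReal t * lebOn01 {x | t < |g x|} ^ (1/p) ≤ weakQuasinorm lebOn01 p g :=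
  le_iSup₂ (f := fun (t : ℝ) (_ : 0 < t) =>
    ENNReal.ofReal t * lebOn01 {x | t < |g x|} ^ (1/p)) t ht

/-- Order-continuity predicate for a single function. -/
def HocP (p : ℝ) (g : ℝ → ℝ) (ε δ : ℝ) : Prop :=
  ∀ A : Set ℝ, MeasurableSet A → 0 < lebOn01 A → lebOn01 A < ENNReal.ofReal δ →
    lebOn01 A ^ (1 / p - 1) * ∫⁻ x in A, ENNReal.ofReal (g x) ∂lebOn01 ≤ ENNReal.ofReal ε

lemma good_bound {p : ℝ} (hp : 1 < p) {ε δ : ℝ} (hδ : 0 < δ) {g : ℝ → ℝ}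
    (hg : Measurable g) (hgpos : ∀ x, 0 ≤ g x) (hoc : HocP p g ε δ)
    {s : ℝ} (hs : 0 < s) (hsmall : lebOn01 {x | s < g x} < ENNReal.ofReal δ) :
    ENNReal.ofReal s * lebOn01 {x | s < g x} ^ (1/p) ≤ ENNReal.ofReal ε := by
  set A : Set ℝ := {x | s < g x} with hA
  have hAmeas : MeasurableSet A := hg measurableSet_Ioi
  rcases eq_or_ne (lebOn01 A) 0 with h0 | h0
  · rw [h0, ENNReal.zero_rpow_of_pos (by positivity), mul_zero]
    exact zero_le
  have hApos : 0 < lebOn01 A := pos_iff_ne_zero.2 h0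
  have key := hoc A hAmeas hApos hsmall
  have hint : ENNReal.ofReal s * lebOn01 A ≤ ∫⁻ x in A, ENNReal.ofReal (g x) ∂lebOn01 := by
    rw [← setLIntegral_const A (ENNReal.ofReal s)]
    refine setLIntegral_mono' hAmeas fun x hx => ?_
    exact ENNReal.ofReal_le_ofReal (le_of_lt hx)
  have hsplit : lebOn01 A ^ (1/p : ℝ) = lebOn01 A * lebOn01 A ^ (1/p - 1 : ℝ) := by
    have h2 := ENNReal.rpow_add 1 (1/p-1) h0 (lebOn01_ne_top A)
    rw [ENNReal.rpow_one] at h2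
    rw [← h2]; congr 1; ring
  calc ENNReal.ofReal s * lebOn01 A ^ (1/p : ℝ)
      = lebOn01 A ^ (1/p - 1 : ℝ) * (ENNReal.ofReal s * lebOn01 A) := by
        rw [hsplit]; ring
    _ ≤ lebOn01 A ^ (1/p - 1 : ℝ) * ∫⁻ x in A, ENNReal.ofReal (g x) ∂lebOn01 :=
        mul_le_mul_right hint _
    _ ≤ ENNReal.ofReal ε := key


/-- The sequence of "c" constants. -/
def cseq (k : ℕ) : ℝ := (1/2 : ℝ) ^ (k + 1)

lemma cseq_pos (k : ℕ) : 0 < cseq k := by unfold cseq; positivity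

lemma cseq_le_one (k : ℕ) : cseq k ≤ 1 := by
  unfold cseq
  calc ((1:ℝ)/2) ^ (k+1) ≤ 1 ^ (k+1) := by
        apply pow_le_pow_left₀ (by norm_num) (by norm_num)
  _ = 1 := one_pow _

lemma sum_cseq_le_one (s : Finset ℕ) :
    (∑ k ∈ s, ENNReal.ofReal (cseq k)) ≤ 1 := by
  have h1 : (∑ k ∈ s, ENNReal.ofReal (cseq k)) = ENNReal.ofReal (∑ k ∈ s, cseq k) :=
    (ENNReal.ofReal_sum_of_nonneg (fun k _ => (cseq_pos k).le)).symm
  rw [h1]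
  have h2 : (∑ k ∈ s, cseq k) ≤ 1 := by
    have hsub : s ⊆ Finset.range (s.sup id + 1) := by
      intro k hk
      simp only [Finset.mem_range]
      exact Nat.lt_succ_of_le (Finset.le_sup (f := id) hk)
    calc (∑ k ∈ s, cseq k) ≤ ∑ k ∈ Finset.range (s.sup id + 1), cseq k :=
          Finset.sum_le_sum_of_subset_of_nonneg hsub (fun k _ _ => (cseq_pos k).le)
    _ ≤ 1 := by
        unfold cseq
        have h3 : (∑ k ∈ Finset.range (s.sup id + 1), ((1:ℝ)/2) ^ (k+1))
            = (1/2) * ∑ k ∈ Finset.range (s.sup id + 1), ((1:ℝ)/2) ^ k := by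
          rw [Finset.mul_sum]
          exact Finset.sum_congr rfl fun k _ => by ring
        rw [h3]
        nlinarith [sum_geometric_two_le (s.sup id + 1)]
  exact ENNReal.ofReal_le_one.mpr h2


lemma meas_supp {g : ℝ → ℝ} (hg : Measurable g) : MeasurableSet (Function.support g) := by
  rw [Function.support_eq_preimage]
  exact hg (measurableSet_singleton 0).compl

section Construct

variable (p : ℝ) (f : ℕ → ℝ → ℝ)

lemma supp_tendsto (hmeas : ∀ k, Measurable (f k))
    (hdisj : ∀ k l, k ≠ l → Disjoint (Function.support (f k)) (Function.support (f l))) :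
    Filter.Tendsto (fun n => lebOn01 (Function.support (f n))) Filter.atTop (nhds 0) := by
  apply ENNReal.tendsto_atTop_zero_of_tsum_ne_top
  have h1 : ∑' n, lebOn01 (Function.support (f n)) = lebOn01 (⋃ n, Function.support (f n)) :=
    (measure_iUnion (fun k l hkl => hdisj k l hkl) (fun n => meas_supp (hmeas n))).symm
  rw [h1]
  exact lebOn01_ne_top _

lemma exists_step (hmeas : ∀ k, Measurable (f k))
    (hdisj : ∀ k l, k ≠ l → Disjoint (Function.support (f k)) (Function.support (f l)))
    (hoc : ∀ n, ∀ ε > (0:ℝ), ∃ δ > (0:ℝ), HocP p (f n) ε δ)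
    (m : ℕ) (d : ℝ) (hd : 0 < d) (e : ℝ) (he : 0 < e) (b : ℝ) (hb : 0 < b) :
    ∃ z : ℕ × ℝ, m < z.1 ∧ 0 < z.2 ∧ z.2 ≤ d ∧
      lebOn01 (Function.support (f z.1)) ≤ ENNReal.ofReal b ∧ HocP p (f z.1) e z.2 := by
  have ht := supp_tendsto f hmeas hdisj
  have hev : ∀ᶠ n in Filter.atTop, lebOn01 (Function.support (f n)) < ENNReal.ofReal b :=
    ht.eventually_lt_const (ENNReal.ofReal_pos.2 hb)
  obtain ⟨n, hn1, hn2⟩ := (hev.and (Filter.eventually_gt_atTop m)).exists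
  obtain ⟨δ0, hδ0, hP⟩ := hoc n e he
  refine ⟨(n, min d δ0), hn2, lt_min hd hδ0, min_le_left _ _, hn1.le, ?_⟩
  intro A hA h1 h2
  exact hP A hA h1 (h2.trans_le (ENNReal.ofReal_le_ofReal (min_le_right _ _)))

lemma exists_subseq (hp : 1 < p) (hmeas : ∀ k, Measurable (f k))
    (hdisj : ∀ k l, k ≠ l → Disjoint (Function.support (f k)) (Function.support (f l)))
    (hoc : ∀ n, ∀ ε > (0:ℝ), ∃ δ > (0:ℝ), HocP p (f n) ε δ) :
    ∃ (nk : ℕ → ℕ) (δ : ℕ → ℝ), StrictMono nk ∧ (∀ k, 0 < δ k) ∧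
      (∀ j k, j ≤ k → δ k ≤ δ j) ∧ (∀ k, HocP p (f (nk k)) (cseq k) (δ k)) ∧
      (∀ k, lebOn01 (Function.support (f (nk (k+1)))) ≤
        ENNReal.ofReal (δ k * (cseq (k+1)) ^ p)) := by
  classical
  obtain ⟨δ0, hδ0, hP0⟩ := hoc 0 (cseq 0) (cseq_pos 0)
  have EX : ∀ (k : ℕ) (x : ℕ × ℝ), 0 < x.2 → ∃ z : ℕ × ℝ, x.1 < z.1 ∧ 0 < z.2 ∧ z.2 ≤ x.2 ∧
      lebOn01 (Function.support (f z.1)) ≤ ENNReal.ofReal (x.2 * (cseq (k+1)) ^ p) ∧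
      HocP p (f z.1) (cseq (k+1)) z.2 := fun k x hx =>
    exists_step p f hmeas hdisj hoc x.1 x.2 hx (cseq (k+1)) (cseq_pos _)
      (x.2 * (cseq (k+1)) ^ p) (mul_pos hx (Real.rpow_pos_of_pos (cseq_pos _) p))
  set step : ℕ → ℕ × ℝ → ℕ × ℝ := fun k x =>
    dite (0 < x.2) (fun h => (EX k x h).choose) (fun _ => x) with hstep
  set g : ℕ → ℕ × ℝ := fun k => Nat.rec ((0 : ℕ), δ0) step k with hgdef
  have hgsucc : ∀ k, g (k+1) = step k (g k) := fun _ => rfl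
  have hinv : ∀ k, 0 < (g k).2 ∧ HocP p (f (g k).1) (cseq k) ((g k).2) := by
    intro k
    induction k with
    | zero => exact ⟨hδ0, hP0⟩
    | succ k ih =>
      rw [hgsucc k, hstep]
      simp only [dif_pos ih.1]
      have hspec := (EX k (g k) ih.1).choose_spec
      exact ⟨hspec.2.1, hspec.2.2.2.2⟩
  have hrel : ∀ k, (g k).1 < (g (k+1)).1 ∧ (g (k+1)).2 ≤ (g k).2 ∧
      lebOn01 (Function.support (f (g (k+1)).1)) ≤
        ENNReal.ofReal ((g k).2 * (cseq (k+1)) ^ p) := by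
    intro k
    have h2 := (hinv k).1
    rw [hgsucc k, hstep]
    simp only [dif_pos h2]
    have hspec := (EX k (g k) h2).choose_spec
    exact ⟨hspec.1, hspec.2.2.1, hspec.2.2.2.1⟩
  refine ⟨fun k => (g k).1, fun k => (g k).2,
    strictMono_nat_of_lt_succ (fun k => (hrel k).1), fun k => (hinv k).1, ?_,
    fun k => (hinv k).2, fun k => (hrel k).2.2⟩
  intro j k hjk
  induction k with
  | zero => simp_all
  | succ k ih =>
    rcases Nat.eq_or_lt_of_le hjk with h | h
    · rw [h]
    · exact ((hrel k).2.1).trans (ih (Nat.lt_succ_iff.mp h))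

end Construct

lemma rpow_sum_le {ι : Type*} (s : Finset ι) (m : ι → ℝ≥0∞) {r : ℝ} (h0 : 0 < r) (h1 : r ≤ 1) :
    (∑ k ∈ s, m k) ^ r ≤ ∑ k ∈ s, (m k) ^ r := by
  classical
  induction s using Finset.cons_induction with
  | empty => simp [ENNReal.zero_rpow_of_pos h0]
  | cons a s ha ih =>
    rw [Finset.sum_cons, Finset.sum_cons]
    calc (m a + ∑ k ∈ s, m k) ^ r ≤ (m a) ^ r + (∑ k ∈ s, m k) ^ r :=
          ENNReal.rpow_add_le_add_rpow _ _ h0.le h1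
    _ ≤ (m a) ^ r + ∑ k ∈ s, (m k) ^ r := by gcongr

end C0Aux

/-- A normalized disjoint positive sequence in the order-continuous
part of weak-`L_p[0,1]` has a subsequence equivalent to the unit vector basis of `c₀`. -/
theorem disjoint_sequence_c0_subsequence
    (p : ℝ) (hp : 1 < p)
    (f : ℕ → ℝ → ℝ) (hmeas : ∀ k, Measurable (f k)) (hpos : ∀ k x, 0 ≤ f k x)
    (hdisj : ∀ k l, k ≠ l → Disjoint (Function.support (f k)) (Function.support (f l)))
    (hnorm : ∀ k, weakQuasinorm lebOn01 p (f k) = 1)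
    (hoc : ∀ k, ∀ ε > (0 : ℝ), ∃ δ > (0 : ℝ), ∀ A : Set ℝ, MeasurableSet A →
      0 < lebOn01 A → lebOn01 A < ENNReal.ofReal δ →
      lebOn01 A ^ (1 / p - 1) * ∫⁻ x in A, ENNReal.ofReal (f k x) ∂lebOn01 ≤
        ENNReal.ofReal ε) :
    ∃ nk : ℕ → ℕ, StrictMono nk ∧ ∃ C : ℝ, 1 ≤ C ∧
      ∀ (s : Finset ℕ) (hs : s.Nonempty) (a : ℕ → ℝ),
        ENNReal.ofReal (s.sup' hs fun k => |a k|) ≤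
            weakQuasinorm lebOn01 p (fun x => ∑ k ∈ s, a k * f (nk k) x) ∧
          weakQuasinorm lebOn01 p (fun x => ∑ k ∈ s, a k * f (nk k) x) ≤
            ENNReal.ofReal (C * s.sup' hs fun k => |a k|) := by
  classical
  have hp0 : (0:ℝ) < p := lt_trans one_pos hp
  have hp0' : p ≠ 0 := ne_of_gt hp0
  have hrpos : (0:ℝ) < 1/p := by positivity
  have hrle : (1:ℝ)/p ≤ 1 := by
    rw [div_le_one hp0]; linarith
  obtain ⟨nk, δ, hmono, hδpos, hδanti, hHoc, hsupp⟩ :=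
    C0Aux.exists_subseq p f hp hmeas hdisj hoc
  have habsSet : ∀ n (u : ℝ), {x | u < |f n x|} = {x | u < f n x} := by
    intro n u; ext x; simp [abs_of_nonneg (hpos n x)]
  -- norm-based term bound
  have hnormterm : ∀ n (u : ℝ), 0 < u →
      ENNReal.ofReal u * lebOn01 {x | u < f n x} ^ (1/p) ≤ 1 := by
    intro n u hu
    have := C0Aux.term_le p (f n) hu
    rw [habsSet n u] at this
    exact this.trans_eq (hnorm n)
  refine ⟨nk, hmono, 3, by norm_num, ?_⟩
  intro s hs a
  obtain ⟨k₀, hk₀s, hk₀⟩ := s.exists_mem_eq_sup' hs fun k => |a k|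
  set A : ℝ := s.sup' hs fun k => |a k| with hA
  have hA0 : 0 ≤ A := hk₀ ▸ abs_nonneg _
  have hles : ∀ k ∈ s, |a k| ≤ A := by
    intro k hk; rw [hA]; exact Finset.le_sup' (fun k => |a k|) hk
  set F : ℝ → ℝ := fun x => ∑ k ∈ s, a k * f (nk k) x with hFdef
  -- the sum collapses on each support
  have hcollapse : ∀ (k : ℕ), k ∈ s → ∀ x, f (nk k) x ≠ 0 → F x = a k * f (nk k) x := by
    intro k hk x hx
    refine Finset.sum_eq_single_of_mem k hk ?_
    intro j hj hjk
    have hdisjkj := hdisj (nk j) (nk k) (fun h => hjk (hmono.injective h))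
    have : f (nk j) x = 0 := by
      by_contra hcon
      exact (Set.disjoint_left.mp hdisjkj hcon) hx
    rw [this, mul_zero]
  constructor
  · -- lower bound
    rw [hk₀]
    rcases eq_or_ne (a k₀) 0 with h0 | h0
    · simp [h0]
    have ha : 0 < |a k₀| := abs_pos.2 h0
    have key : ∀ u : ℝ, 0 < u →
        ENNReal.ofReal |a k₀| * (ENNReal.ofReal u * lebOn01 {x | u < |f (nk k₀) x|} ^ (1/p)) ≤
          weakQuasinorm lebOn01 p F := by
      intro u hu
      have hsub : {x | u < |f (nk k₀) x|} ⊆ {x | |a k₀| * u < |F x|} := by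
        intro x hx
        simp only [Set.mem_setOf_eq] at hx ⊢
        rw [abs_of_nonneg (hpos (nk k₀) x)] at hx
        have hfx : f (nk k₀) x ≠ 0 := ne_of_gt (lt_trans hu hx)
        rw [hcollapse k₀ hk₀s x hfx, abs_mul, abs_of_nonneg (hpos (nk k₀) x)]
        exact (mul_lt_mul_iff_right₀ ha).2 hx
      calc ENNReal.ofReal |a k₀| * (ENNReal.ofReal u * lebOn01 {x | u < |f (nk k₀) x|} ^ (1/p))
          = ENNReal.ofReal (|a k₀| * u) * lebOn01 {x | u < |f (nk k₀) x|} ^ (1/p) := by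
            rw [ENNReal.ofReal_mul (abs_nonneg _), mul_assoc]
        _ ≤ ENNReal.ofReal (|a k₀| * u) * lebOn01 {x | |a k₀| * u < |F x|} ^ (1/p) := by
            gcongr
        _ ≤ weakQuasinorm lebOn01 p F := C0Aux.term_le p F (mul_pos ha hu)
    have hQ : ENNReal.ofReal |a k₀| * weakQuasinorm lebOn01 p (f (nk k₀)) ≤
        weakQuasinorm lebOn01 p F := by
      rw [weakQuasinorm, ENNReal.mul_iSup]
      refine iSup_le fun u => ?_
      rw [ENNReal.mul_iSup]
      exact iSup_le fun hu => key u hu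
    rwa [hnorm, mul_one] at hQ
  · -- upper bound
    rw [weakQuasinorm]
    refine iSup₂_le fun t ht => ?_
    set m : ℕ → ℝ≥0∞ := fun k => lebOn01 {x | t < |a k * f (nk k) x|} with hm
    have hsubU : {x | t < |F x|} ⊆ ⋃ k ∈ s, {x | t < |a k * f (nk k) x|} := by
      intro x hx
      simp only [Set.mem_setOf_eq] at hx
      have hFx : F x ≠ 0 := by
        intro h; rw [h, abs_zero] at hx; linarith
      have hex : ∃ k ∈ s, a k * f (nk k) x ≠ 0 := by
        by_contra hcon
        push_neg at hcon
        exact hFx (Finset.sum_eq_zero hcon)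
      obtain ⟨k, hk, hak⟩ := hex
      have hfx : f (nk k) x ≠ 0 := fun h => hak (by rw [h, mul_zero])
      refine Set.mem_biUnion hk ?_
      simp only [Set.mem_setOf_eq]
      rw [← hcollapse k hk x hfx]
      exact hx
    have h1 : lebOn01 {x | t < |F x|} ≤ ∑ k ∈ s, m k :=
      (measure_mono hsubU).trans (measure_biUnion_finset_le _ _)
    have hterm : ENNReal.ofReal t * lebOn01 {x | t < |F x|} ^ (1/p) ≤
        ∑ k ∈ s, ENNReal.ofReal t * (m k) ^ (1/p) := by
      calc ENNReal.ofReal t * lebOn01 {x | t < |F x|} ^ (1/p)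
          ≤ ENNReal.ofReal t * (∑ k ∈ s, m k) ^ (1/p) := by gcongr
        _ ≤ ENNReal.ofReal t * ∑ k ∈ s, (m k) ^ (1/p) :=
            mul_le_mul_right (C0Aux.rpow_sum_le s m hrpos hrle) _
        _ = ∑ k ∈ s, ENNReal.ofReal t * (m k) ^ (1/p) := Finset.mul_sum _ _ _
    have hscale : ∀ k, a k ≠ 0 →
        {x | t < |a k * f (nk k) x|} = {x | t / |a k| < f (nk k) x} := by
      intro k hak
      ext x
      simp only [Set.mem_setOf_eq]
      rw [abs_mul, abs_of_nonneg (hpos (nk k) x), div_lt_iff₀ (abs_pos.2 hak), mul_comm]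
    have hmzero : ∀ k, a k = 0 → m k = 0 := by
      intro k hak
      rw [hm]
      simp only [hak, zero_mul, abs_zero]
      have he : {x : ℝ | t < 0} = ∅ := by ext x; simp; linarith
      rw [he, measure_empty]
    have hm_t : ∀ k, a k ≠ 0 → m k = lebOn01 {x | t / |a k| < f (nk k) x} := by
      intro k h
      have hb : m k = lebOn01 {x | t < |a k * f (nk k) x|} := rfl
      rw [hb, hscale k h]
    have hsplitt : ∀ k, a k ≠ 0 →
        ENNReal.ofReal t = ENNReal.ofReal |a k| * ENNReal.ofReal (t / |a k|) := by
      intro k h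
      rw [← ENNReal.ofReal_mul (abs_nonneg _)]
      congr 1
      field_simp
    have htermA : ∀ k ∈ s, ENNReal.ofReal t * (m k) ^ (1/p) ≤ ENNReal.ofReal A := by
      intro k hk
      rcases eq_or_ne (a k) 0 with h0 | h0
      · rw [hmzero k h0, ENNReal.zero_rpow_of_pos hrpos, mul_zero]; exact zero_le
      have hsk : 0 < t / |a k| := div_pos ht (abs_pos.2 h0)
      rw [hm_t k h0, hsplitt k h0, mul_assoc]
      calc ENNReal.ofReal |a k| *
            (ENNReal.ofReal (t/|a k|) * lebOn01 {x | t/|a k| < f (nk k) x} ^ (1/p))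
          ≤ ENNReal.ofReal |a k| * 1 := mul_le_mul_right (hnormterm (nk k) _ hsk) _
        _ = ENNReal.ofReal |a k| := mul_one _
        _ ≤ ENNReal.ofReal A := ENNReal.ofReal_le_ofReal (hles k hk)
    have hgood : ∀ k ∈ s, m k < ENNReal.ofReal (δ k) →
        ENNReal.ofReal t * (m k) ^ (1/p) ≤ ENNReal.ofReal (A * C0Aux.cseq k) := by
      intro k hk hsmall
      rcases eq_or_ne (a k) 0 with h0 | h0
      · rw [hmzero k h0, ENNReal.zero_rpow_of_pos hrpos, mul_zero]; exact zero_le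
      have hsk : 0 < t / |a k| := div_pos ht (abs_pos.2 h0)
      have hsmall' : lebOn01 {x | t/|a k| < f (nk k) x} < ENNReal.ofReal (δ k) := by
        rw [← hm_t k h0]; exact hsmall
      have hb := C0Aux.good_bound hp (hδpos k) (hmeas (nk k)) (fun x => hpos (nk k) x)
        (hHoc k) hsk hsmall'
      rw [hm_t k h0, hsplitt k h0, mul_assoc]
      calc ENNReal.ofReal |a k| *
            (ENNReal.ofReal (t/|a k|) * lebOn01 {x | t/|a k| < f (nk k) x} ^ (1/p))
          ≤ ENNReal.ofReal |a k| * ENNReal.ofReal (C0Aux.cseq k) := mul_le_mul_right hb _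
        _ = ENNReal.ofReal (|a k| * C0Aux.cseq k) := (ENNReal.ofReal_mul (abs_nonneg _)).symm
        _ ≤ ENNReal.ofReal (A * C0Aux.cseq k) := ENNReal.ofReal_le_ofReal
            (mul_le_mul_of_nonneg_right (hles k hk) (C0Aux.cseq_pos k).le)
    have hAsum : ∀ u : Finset ℕ, (∑ k ∈ u, ENNReal.ofReal (A * C0Aux.cseq k)) ≤
        ENNReal.ofReal A := by
      intro u
      calc (∑ k ∈ u, ENNReal.ofReal (A * C0Aux.cseq k))
          = ∑ k ∈ u, ENNReal.ofReal A * ENNReal.ofReal (C0Aux.cseq k) := by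
            refine Finset.sum_congr rfl fun k _ => ?_
            rw [← ENNReal.ofReal_mul hA0]
        _ = ENNReal.ofReal A * ∑ k ∈ u, ENNReal.ofReal (C0Aux.cseq k) :=
            (Finset.mul_sum _ _ _).symm
        _ ≤ ENNReal.ofReal A * 1 := mul_le_mul_right (C0Aux.sum_cseq_le_one u) _
        _ = ENNReal.ofReal A := mul_one _
    set T : Finset ℕ := s.filter (fun k => ENNReal.ofReal (δ k) ≤ m k) with hTdef
    by_cases hTne : T.Nonempty
    · -- there is a "bad" index; K is the least one
      set K := T.min' hTne with hKdef
      have hKT : K ∈ T := T.min'_mem hTne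
      have hKs : K ∈ s := (Finset.mem_filter.1 hKT).1
      have hKbad : ENNReal.ofReal (δ K) ≤ m K := (Finset.mem_filter.1 hKT).2
      have haK : a K ≠ 0 := by
        intro h0
        rw [hmzero K h0] at hKbad
        have := (ENNReal.ofReal_pos.2 (hδpos K)).trans_le hKbad
        exact absurd this (lt_irrefl 0)
      have hsK : 0 < t / |a K| := div_pos ht (abs_pos.2 haK)
      have hn1 : ENNReal.ofReal (t/|a K|) * (ENNReal.ofReal (δ K)) ^ ((1:ℝ)/p) ≤ 1 := by
        calc ENNReal.ofReal (t/|a K|) * (ENNReal.ofReal (δ K)) ^ ((1:ℝ)/p)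
            ≤ ENNReal.ofReal (t/|a K|) * (m K) ^ ((1:ℝ)/p) := by gcongr
          _ ≤ 1 := by rw [hm_t K haK]; exact hnormterm (nk K) _ hsK
      have hreal : t/|a K| * (δ K) ^ ((1:ℝ)/p) ≤ 1 := by
        rw [ENNReal.ofReal_rpow_of_pos (hδpos K), ← ENNReal.ofReal_mul hsK.le] at hn1
        exact ENNReal.ofReal_le_one.1 hn1
      have htle : t ≤ A * (δ K) ^ (-((1:ℝ)/p)) := by
        have hd : 0 < (δ K) ^ ((1:ℝ)/p) := Real.rpow_pos_of_pos (hδpos K) _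
        have h2 : t / |a K| ≤ ((δ K) ^ ((1:ℝ)/p))⁻¹ := by
          rw [← one_div, le_div_iff₀ hd]
          exact hreal
        have h3 : t = |a K| * (t / |a K|) := by field_simp
        rw [h3, Real.rpow_neg (hδpos K).le]
        exact mul_le_mul (hles K hKs) h2 hsK.le hA0
      have hbadk : ∀ k ∈ s, k ≠ K → ENNReal.ofReal (δ k) ≤ m k →
          ENNReal.ofReal t * (m k) ^ (1/p) ≤ ENNReal.ofReal (A * C0Aux.cseq k) := by
        intro k hk hkK hbad
        have hKk : K < k :=
          lt_of_le_of_ne (T.min'_le k (Finset.mem_filter.2 ⟨hk, hbad⟩)) (Ne.symm hkK)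
        obtain ⟨j, rfl⟩ : ∃ j, k = j + 1 :=
          ⟨k - 1, (Nat.succ_pred_eq_of_pos (Nat.pos_of_ne_zero
            (fun h => by simp [h] at hKk))).symm⟩
        have hKj : K ≤ j := Nat.lt_succ_iff.1 hKk
        have hsub2 : {x | t < |a (j+1) * f (nk (j+1)) x|} ⊆ Function.support (f (nk (j+1))) := by
          intro x hx
          simp only [Set.mem_setOf_eq] at hx
          intro h
          rw [h, mul_zero, abs_zero] at hx
          linarith
        have hmk : m (j+1) ≤ ENNReal.ofReal (δ K * C0Aux.cseq (j+1) ^ p) := by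
          calc m (j+1) ≤ lebOn01 (Function.support (f (nk (j+1)))) := measure_mono hsub2
            _ ≤ ENNReal.ofReal (δ j * C0Aux.cseq (j+1) ^ p) := hsupp j
            _ ≤ ENNReal.ofReal (δ K * C0Aux.cseq (j+1) ^ p) := ENNReal.ofReal_le_ofReal
                (mul_le_mul_of_nonneg_right (hδanti K j hKj)
                  (Real.rpow_nonneg (C0Aux.cseq_pos _).le p))
        have e1 : ((δ K * C0Aux.cseq (j+1) ^ p) : ℝ) ^ ((1:ℝ)/p)
            = δ K ^ ((1:ℝ)/p) * C0Aux.cseq (j+1) := by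
          rw [Real.mul_rpow (hδpos K).le (Real.rpow_nonneg (C0Aux.cseq_pos _).le p),
            ← Real.rpow_mul (C0Aux.cseq_pos _).le, mul_one_div_cancel hp0', Real.rpow_one]
        have e2 : (δ K) ^ (-((1:ℝ)/p)) * (δ K) ^ ((1:ℝ)/p) = 1 := by
          rw [← Real.rpow_add (hδpos K)]
          norm_num
        calc ENNReal.ofReal t * (m (j+1)) ^ (1/p)
            ≤ ENNReal.ofReal (A * (δ K) ^ (-((1:ℝ)/p))) *
              (ENNReal.ofReal (δ K * C0Aux.cseq (j+1) ^ p)) ^ ((1:ℝ)/p) := by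
              gcongr
          _ = ENNReal.ofReal (A * (δ K) ^ (-((1:ℝ)/p))) *
              ENNReal.ofReal ((δ K * C0Aux.cseq (j+1) ^ p) ^ ((1:ℝ)/p)) := by
              rw [ENNReal.ofReal_rpow_of_pos
                (mul_pos (hδpos K) (Real.rpow_pos_of_pos (C0Aux.cseq_pos _) p))]
          _ = ENNReal.ofReal ((A * (δ K) ^ (-((1:ℝ)/p))) *
              ((δ K * C0Aux.cseq (j+1) ^ p) ^ ((1:ℝ)/p))) := by
              rw [← ENNReal.ofReal_mul (mul_nonneg hA0 (Real.rpow_nonneg (hδpos K).le _))]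
          _ = ENNReal.ofReal (A * C0Aux.cseq (j+1)) := by
              congr 1
              rw [e1]
              calc A * (δ K) ^ (-((1:ℝ)/p)) * ((δ K) ^ ((1:ℝ)/p) * C0Aux.cseq (j+1))
                  = A * C0Aux.cseq (j+1) * ((δ K) ^ (-((1:ℝ)/p)) * (δ K) ^ ((1:ℝ)/p)) := by
                    ring
                _ = A * C0Aux.cseq (j+1) := by rw [e2, mul_one]
      calc ENNReal.ofReal t * lebOn01 {x | t < |F x|} ^ (1/p)
          ≤ ∑ k ∈ s, ENNReal.ofReal t * (m k) ^ (1/p) := hterm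
        _ = ENNReal.ofReal t * (m K) ^ (1/p) +
            ∑ k ∈ s.erase K, ENNReal.ofReal t * (m k) ^ (1/p) :=
            (Finset.add_sum_erase s _ hKs).symm
        _ ≤ ENNReal.ofReal A + ∑ k ∈ s.erase K, ENNReal.ofReal (A * C0Aux.cseq k) := by
            refine add_le_add (htermA K hKs) (Finset.sum_le_sum fun k hk => ?_)
            have hk' : k ∈ s := Finset.mem_of_mem_erase hk
            have hne : k ≠ K := Finset.ne_of_mem_erase hk
            by_cases hb : ENNReal.ofReal (δ k) ≤ m k
            · exact hbadk k hk' hne hb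
            · exact hgood k hk' (not_le.1 hb)
        _ ≤ ENNReal.ofReal A + ENNReal.ofReal A := add_le_add_right (hAsum _) _
        _ ≤ ENNReal.ofReal (3 * A) := by
            rw [← ENNReal.ofReal_add hA0 hA0]
            exact ENNReal.ofReal_le_ofReal (by linarith)
    · -- no bad index: every term is good
      have hallgood : ∀ k ∈ s, m k < ENNReal.ofReal (δ k) := by
        intro k hk
        by_contra h
        exact hTne ⟨k, Finset.mem_filter.2 ⟨hk, not_lt.1 h⟩⟩
      calc ENNReal.ofReal t * lebOn01 {x | t < |F x|} ^ (1/p)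
          ≤ ∑ k ∈ s, ENNReal.ofReal t * (m k) ^ (1/p) := hterm
        _ ≤ ∑ k ∈ s, ENNReal.ofReal (A * C0Aux.cseq k) :=
            Finset.sum_le_sum fun k hk => hgood k hk (hallgood k hk)
        _ ≤ ENNReal.ofReal A := hAsum s
        _ ≤ ENNReal.ofReal (3 * A) := ENNReal.ofReal_le_ofReal (by linarith)

end
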